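/- For all 1 ≤ a ≤ k-l and all n ≥ 0, the number of C_{a,l}^k-avoiding permutations in S_n equals the number of C_{1,l}^k-avoiding permutations in S_n. -/

import Mathlib

open Finset

/-- `π` contains an occurrence of the generalized pattern given by `σ ∈ S_k`,
where `adj j` means that positions `j` and `j+1` of the pattern must be
matched to adjacent positions of the permutation. -/
def IsOcc {n k : ℕ} (π : Equiv.Perm (Fin n)) (σ : Equiv.Perm (Fin k)) (adj : ℕ → Prop) : Prop :=
  ∃ ι : Fin k → Fin n, StrictMono ι ∧
    (∀ j : ℕ, ∀ hj : j + 1 < k, adj j → (ι ⟨j + 1, hj⟩ : ℕ) = (ι ⟨j, by omega⟩ : ℕ) + 1) ∧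
    (∀ s t : Fin k, σ s < σ t ↔ π (ι s) < π (ι t))

/-- `π` avoids every pattern in `C_{a,l}^k` (patterns `σ₁σ₂-σ₃-⋯-σ_k` with
`σ₁ = a`, `σ₂ = a + l`, first two letters adjacent); values are `1`-based. -/
def AvoidsC (a l k : ℕ) {n : ℕ} (π : Equiv.Perm (Fin n)) : Prop :=
  ∀ σ : Equiv.Perm (Fin k), ∀ h0 : 0 < k, ∀ h1 : 1 < k,
    (σ ⟨0, h0⟩ : ℕ) + 1 = a → (σ ⟨1, h1⟩ : ℕ) + 1 = a + l →
    ¬ IsOcc π σ (fun j => j = 0)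

/-- `c_{a,l}^k(n)`. -/
noncomputable def cC (a l k n : ℕ) : ℕ :=
  Nat.card {π : Equiv.Perm (Fin n) // AvoidsC a l k π}

/-- `c_{a,l}^k(n; j)`: additionally the first letter of the permutation is `j` (1-based). -/
noncomputable def cCf (a l k n j : ℕ) : ℕ :=
  Nat.card {π : Equiv.Perm (Fin n) //
    AvoidsC a l k π ∧ ∀ hn : 0 < n, (π ⟨0, hn⟩ : ℕ) + 1 = j}

/-- Counting characterization of containment. -/
def ContainsC (a l k : ℕ) {n : ℕ} (π : Equiv.Perm (Fin n)) : Prop :=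
  ∃ i : ℕ, ∃ hi : i + 1 < n,
    π ⟨i, by omega⟩ < π ⟨i + 1, hi⟩ ∧
    a - 1 ≤ (univ.filter fun t : Fin n => i + 1 < (t : ℕ) ∧ π t < π ⟨i, by omega⟩).card ∧
    l - 1 ≤ (univ.filter fun t : Fin n =>
        i + 1 < (t : ℕ) ∧ π ⟨i, by omega⟩ < π t ∧ π t < π ⟨i + 1, hi⟩).card ∧
    k - (a + l) ≤ (univ.filter fun t : Fin n => i + 1 < (t : ℕ) ∧ π ⟨i + 1, hi⟩ < π t).card

lemma perm_filter_lt_card {k : ℕ} (σ : Equiv.Perm (Fin k)) (c : Fin k) :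
    ((univ : Finset (Fin k)).filter fun s => σ s < c).card = (c : ℕ) := by
  have h : ((univ : Finset (Fin k)).filter fun s => σ s < c)
      = (Iio c).map σ.symm.toEmbedding := by
    ext s
    simp [Equiv.symm_apply_eq, eq_comm]
  rw [h, Finset.card_map, Fin.card_Iio]

lemma perm_filter_between_card {k : ℕ} (σ : Equiv.Perm (Fin k)) (c₁ c₂ : Fin k) :
    ((univ : Finset (Fin k)).filter fun s => c₁ < σ s ∧ σ s < c₂).card
      = (c₂ : ℕ) - c₁ - 1 := by
  have h : ((univ : Finset (Fin k)).filter fun s => c₁ < σ s ∧ σ s < c₂)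
      = (Ioo c₁ c₂).map σ.symm.toEmbedding := by
    ext s
    simp [Equiv.symm_apply_eq, eq_comm, and_comm]
  rw [h, Finset.card_map, Fin.card_Ioo]

lemma perm_filter_gt_card {k : ℕ} (σ : Equiv.Perm (Fin k)) (c : Fin k) :
    ((univ : Finset (Fin k)).filter fun s => c < σ s).card = k - 1 - (c : ℕ) := by
  have h : ((univ : Finset (Fin k)).filter fun s => c < σ s)
      = (Ioi c).map σ.symm.toEmbedding := by
    ext s
    simp [Equiv.symm_apply_eq, eq_comm]
  rw [h, Finset.card_map, Fin.card_Ioi]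

lemma containsC_of_isOcc {a l k n : ℕ} (hl : 1 ≤ l)
    {π : Equiv.Perm (Fin n)} (σ : Equiv.Perm (Fin k)) (h0 : 0 < k) (h1 : 1 < k)
    (hs0 : (σ ⟨0, h0⟩ : ℕ) + 1 = a) (hs1 : (σ ⟨1, h1⟩ : ℕ) + 1 = a + l)
    (hocc : IsOcc π σ (fun j => j = 0)) : ContainsC a l k π := by
  obtain ⟨ι, hmono, hadj, hord⟩ := hocc
  have hi1 : (ι ⟨1, h1⟩ : ℕ) = (ι ⟨0, h0⟩ : ℕ) + 1 := hadj 0 h1 rfl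
  set i0 : Fin n := ι ⟨0, h0⟩ with hdef0
  set i1 : Fin n := ι ⟨1, h1⟩ with hdef1
  have hi : (i0 : ℕ) + 1 < n := by rw [← hi1]; exact i1.isLt
  have e0 : (⟨(i0 : ℕ), by omega⟩ : Fin n) = i0 := rfl
  have e1 : (⟨(i0 : ℕ) + 1, hi⟩ : Fin n) = i1 := by
    apply Fin.ext; simp [hi1]
  have hσ01 : σ ⟨0, h0⟩ < σ ⟨1, h1⟩ := by
    rw [Fin.lt_iff_val_lt_val]; omega
  have hne : ∀ s : Fin k, s ≠ ⟨0, h0⟩ → s ≠ ⟨1, h1⟩ → (i0 : ℕ) + 1 < (ι s : ℕ) := by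
    intro s hs0' hs1'
    have : (⟨1, h1⟩ : Fin k) < s := by
      rw [Fin.lt_iff_val_lt_val]
      have := Fin.ext_iff.not.mp hs0'
      have := Fin.ext_iff.not.mp hs1'
      simp at *
      omega
    have := hmono this
    rw [← hi1]
    exact this
  refine ⟨(i0 : ℕ), hi, ?_, ?_, ?_, ?_⟩
  · rw [e0, e1]; exact (hord _ _).mp hσ01
  · rw [e0]
    have hcard := perm_filter_lt_card σ (σ ⟨0, h0⟩)
    calc a - 1 = ((univ : Finset (Fin k)).filter fun s => σ s < σ ⟨0, h0⟩).card := by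
          rw [hcard]; omega
      _ ≤ _ := by
          apply Finset.card_le_card_of_injOn ι
          · intro s hs
            simp only [Finset.mem_coe, mem_filter, mem_univ, true_and] at hs ⊢
            have hs0' : s ≠ ⟨0, h0⟩ := by rintro rfl; exact lt_irrefl _ hs
            have hs1' : s ≠ ⟨1, h1⟩ := by rintro rfl; exact absurd (hs.trans hσ01) (lt_irrefl _)
            exact ⟨hne s hs0' hs1', (hord _ _).mp hs⟩
          · exact (hmono.injective.injOn)
  · rw [e0, e1]
    have hcard := perm_filter_between_card σ (σ ⟨0, h0⟩) (σ ⟨1, h1⟩)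
    calc l - 1 = ((univ : Finset (Fin k)).filter
          fun s => σ ⟨0, h0⟩ < σ s ∧ σ s < σ ⟨1, h1⟩).card := by rw [hcard]; omega
      _ ≤ _ := by
          apply Finset.card_le_card_of_injOn ι
          · intro s hs
            simp only [Finset.mem_coe, mem_filter, mem_univ, true_and] at hs ⊢
            have hs0' : s ≠ ⟨0, h0⟩ := by rintro rfl; exact lt_irrefl _ hs.1
            have hs1' : s ≠ ⟨1, h1⟩ := by rintro rfl; exact lt_irrefl _ hs.2
            exact ⟨hne s hs0' hs1', (hord _ _).mp hs.1, (hord _ _).mp hs.2⟩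
          · exact (hmono.injective.injOn)
  · rw [e1]
    have hcard := perm_filter_gt_card σ (σ ⟨1, h1⟩)
    calc k - (a + l) = ((univ : Finset (Fin k)).filter
          fun s => σ ⟨1, h1⟩ < σ s).card := by rw [hcard]; omega
      _ ≤ _ := by
          apply Finset.card_le_card_of_injOn ι
          · intro s hs
            simp only [Finset.mem_coe, mem_filter, mem_univ, true_and] at hs ⊢
            have hs1' : s ≠ ⟨1, h1⟩ := by rintro rfl; exact lt_irrefl _ hs
            have hs0' : s ≠ ⟨0, h0⟩ := by
              rintro rfl; exact absurd (hσ01.trans hs) (lt_irrefl _)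
            exact ⟨hne s hs0' hs1', (hord _ _).mp hs⟩
          · exact (hmono.injective.injOn)

lemma not_avoidsC_of_containsC {a l k n : ℕ} (ha : 1 ≤ a) (hl : 1 ≤ l) (hak : a + l ≤ k)
    {π : Equiv.Perm (Fin n)} (hc : ContainsC a l k π) : ¬ AvoidsC a l k π := by
  have h0k : 0 < k := by omega
  have h1k : 1 < k := by omega
  obtain ⟨i, hi, hasc, hA, hB, hC⟩ := hc
  set p0 : Fin n := ⟨i, by omega⟩ with hp0def
  set p1 : Fin n := ⟨i + 1, hi⟩ with hp1def
  set x := π p0 with hx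
  set y := π p1 with hy
  obtain ⟨S1, hS1sub, hS1card⟩ := Finset.exists_subset_card_eq hA
  obtain ⟨S2, hS2sub, hS2card⟩ := Finset.exists_subset_card_eq hB
  obtain ⟨S3, hS3sub, hS3card⟩ := Finset.exists_subset_card_eq hC
  have hS1 : ∀ t ∈ S1, i + 1 < (t : ℕ) ∧ π t < x := fun t ht => by
    simpa using hS1sub ht
  have hS2 : ∀ t ∈ S2, i + 1 < (t : ℕ) ∧ x < π t ∧ π t < y := fun t ht => by
    simpa using hS2sub ht
  have hS3 : ∀ t ∈ S3, i + 1 < (t : ℕ) ∧ y < π t := fun t ht => by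
    simpa using hS3sub ht
  have hd12 : Disjoint S1 S2 := by
    rw [Finset.disjoint_left]
    intro t ht1 ht2
    exact absurd ((hS1 t ht1).2.trans (hS2 t ht2).2.1) (lt_irrefl _)
  have hd13 : Disjoint S1 S3 := by
    rw [Finset.disjoint_left]
    intro t ht1 ht3
    exact absurd (((hS1 t ht1).2.trans hasc).trans (hS3 t ht3).2) (lt_irrefl _)
  have hd23 : Disjoint S2 S3 := by
    rw [Finset.disjoint_left]
    intro t ht2 ht3
    exact absurd ((hS2 t ht2).2.2.trans (hS3 t ht3).2) (lt_irrefl _)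
  set U := S1 ∪ S2 ∪ S3 with hUdef
  have hU : ∀ t ∈ U, i + 1 < (t : ℕ) := by
    intro t ht
    simp only [hUdef, mem_union] at ht
    rcases ht with (ht | ht) | ht
    exacts [(hS1 t ht).1, (hS2 t ht).1, (hS3 t ht).1]
  have hUcard : U.card = k - 2 := by
    rw [hUdef, card_union_of_disjoint (by
      rw [Finset.disjoint_union_left]; exact ⟨hd13, hd23⟩),
      card_union_of_disjoint hd12, hS1card, hS2card, hS3card]
    omega
  have hp1U : p1 ∉ U := fun h => by
    have := hU p1 h; simp only [hp1def] at this; omega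
  have hp0U : p0 ∉ U := fun h => by
    have := hU p0 h; simp only [hp0def] at this; omega
  have hp01 : p0 ≠ p1 := by simp [hp0def, hp1def, Fin.ext_iff]
  set T := insert p0 (insert p1 U) with hTdef
  have hTcard : T.card = k := by
    rw [hTdef, card_insert_of_notMem (by simp [hp01, hp0U]),
      card_insert_of_notMem hp1U, hUcard]
    omega
  set e := T.orderEmbOfFin hTcard with hedef
  have hmem : ∀ j : Fin k, e j ∈ T := fun j => Finset.orderEmbOfFin_mem T hTcard j
  have hTge : ∀ t ∈ T, p0 ≤ t := by
    intro t ht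
    simp only [hTdef, mem_insert] at ht
    rcases ht with rfl | rfl | ht
    · exact le_refl _
    · exact le_of_lt (by simp [hp0def, hp1def, Fin.lt_iff_val_lt_val])
    · exact le_of_lt (by have := hU t ht; rw [Fin.lt_iff_val_lt_val]; simp [hp0def]; omega)
  have hrange : ∀ t ∈ T, ∃ j : Fin k, e j = t := by
    intro t ht
    have : (t : Fin n) ∈ Set.range e := by
      rw [hedef, Finset.range_orderEmbOfFin]; exact_mod_cast ht
    exact this
  have he0 : e ⟨0, h0k⟩ = p0 := by
    obtain ⟨j, hj⟩ := hrange p0 (by simp [hTdef])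
    refine le_antisymm ?_ (hTge _ (hmem _))
    rw [← hj]
    exact e.monotone (by simp [Fin.le_iff_val_le_val])
  have he1 : e ⟨1, h1k⟩ = p1 := by
    obtain ⟨j, hj⟩ := hrange p1 (by simp [hTdef])
    have hj0 : j ≠ ⟨0, h0k⟩ := by
      rintro rfl; rw [he0] at hj; exact hp01 hj
    refine le_antisymm ?_ ?_
    · rw [← hj]
      apply e.monotone
      rw [Fin.le_iff_val_le_val]
      have := Fin.ext_iff.not.mp hj0
      simp at this ⊢
      omega
    · have h01 : e ⟨0, h0k⟩ < e ⟨1, h1k⟩ := e.strictMono (by simp [Fin.lt_iff_val_lt_val])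
      rw [he0] at h01
      have := hmem ⟨1, h1k⟩
      simp only [hTdef, mem_insert] at this
      rcases this with h' | h' | h'
      · exact absurd h' (ne_of_gt h01)
      · exact le_of_eq h'.symm
      · have := hU _ h'
        rw [Fin.le_iff_val_le_val]
        simp [hp1def]
        omega
  -- the value set
  set V := T.image π with hVdef
  have hVcard : V.card = k := by
    rw [hVdef, Finset.card_image_of_injective T π.injective, hTcard]
  have hbound : ∀ s : Fin k, (V.filter (· < π (e s))).card < k := by
    intro s
    have hmemV : π (e s) ∈ V := by
      rw [hVdef]; exact Finset.mem_image_of_mem π (hmem s)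
    have : V.filter (· < π (e s)) ⊆ V.erase (π (e s)) := by
      intro u hu
      rw [Finset.mem_erase]
      rw [Finset.mem_filter] at hu
      exact ⟨ne_of_lt hu.2, hu.1⟩
    have := Finset.card_le_card this
    have := Finset.card_erase_of_mem hmemV
    omega
  set f : Fin k → Fin k := fun s => ⟨(V.filter (· < π (e s))).card, hbound s⟩ with hfdef
  have hmono : ∀ s t : Fin k, π (e s) < π (e t) → f s < f t := by
    intro s t h
    have hsubset : V.filter (· < π (e s)) ⊆ V.filter (· < π (e t)) := by
      intro u hu
      rw [Finset.mem_filter] at hu ⊢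
      exact ⟨hu.1, lt_trans hu.2 h⟩
    have hmemV : π (e s) ∈ V := by
      rw [hVdef]; exact Finset.mem_image_of_mem π (hmem s)
    apply Finset.card_lt_card
    rw [Finset.ssubset_iff_of_subset hsubset]
    refine ⟨π (e s), ?_, ?_⟩
    · rw [Finset.mem_filter]; exact ⟨hmemV, h⟩
    · rw [Finset.mem_filter]; exact fun h' => absurd h'.2 (lt_irrefl _)
  have hford : ∀ s t : Fin k, f s < f t ↔ π (e s) < π (e t) := by
    intro s t
    constructor
    · intro h
      rcases lt_trichotomy (π (e s)) (π (e t)) with h' | h' | h'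
      · exact h'
      · exfalso
        have : s = t := e.injective (π.injective h')
        subst this
        exact absurd h (lt_irrefl _)
      · exact absurd (hmono _ _ h') (fun h'' => absurd (h.trans h'') (lt_irrefl _))
    · exact hmono s t
  have hfinj : Function.Injective f := by
    intro s t h
    by_contra hne
    rcases lt_trichotomy (π (e s)) (π (e t)) with h' | h' | h'
    · have := hmono _ _ h'; rw [h] at this; exact absurd this (lt_irrefl _)
    · exact hne (e.injective (π.injective h'))
    · have := hmono _ _ h'; rw [h] at this; exact absurd this (lt_irrefl _)
  set σ := Equiv.ofBijective f (Finite.injective_iff_bijective.mp hfinj) with hσdef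
  have hfilx : V.filter (· < x) = S1.image π := by
    ext u
    simp only [Finset.mem_filter, hVdef, Finset.mem_image]
    constructor
    · rintro ⟨⟨t, htT, rfl⟩, hlt⟩
      simp only [hTdef, mem_insert, hUdef, mem_union] at htT
      rcases htT with rfl | rfl | (ht | ht) | ht
      · exact absurd hlt (lt_irrefl _)
      · exact absurd (hasc.trans hlt) (lt_irrefl _)
      · exact ⟨t, ht, rfl⟩
      · exact absurd ((hS2 t ht).2.1.trans hlt) (lt_irrefl _)
      · exact absurd ((hasc.trans (hS3 t ht).2).trans hlt) (lt_irrefl _)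
    · rintro ⟨t, ht, rfl⟩
      exact ⟨⟨t, by simp [hTdef, hUdef, ht], rfl⟩, (hS1 t ht).2⟩
  have hfily : V.filter (· < y) = (insert p0 (S1 ∪ S2)).image π := by
    ext u
    simp only [Finset.mem_filter, hVdef, Finset.mem_image]
    constructor
    · rintro ⟨⟨t, htT, rfl⟩, hlt⟩
      simp only [hTdef, mem_insert, hUdef, mem_union] at htT
      rcases htT with rfl | rfl | (ht | ht) | ht
      · exact ⟨p0, by simp, rfl⟩
      · exact absurd hlt (lt_irrefl _)
      · exact ⟨t, by simp [ht], rfl⟩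
      · exact ⟨t, by simp [ht], rfl⟩
      · exact absurd ((hS3 t ht).2.trans hlt) (lt_irrefl _)
    · rintro ⟨t, ht, rfl⟩
      simp only [mem_insert, mem_union] at ht
      rcases ht with h' | ht | ht
      · refine ⟨⟨t, by simp [hTdef, h'], rfl⟩, ?_⟩
        rw [h']; exact hasc
      · exact ⟨⟨t, by simp [hTdef, hUdef, ht], rfl⟩, (hS1 t ht).2.trans hasc⟩
      · exact ⟨⟨t, by simp [hTdef, hUdef, ht], rfl⟩, (hS2 t ht).2.2⟩
  have hσ0 : (σ ⟨0, h0k⟩ : ℕ) + 1 = a := by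
    have : (σ ⟨0, h0k⟩ : ℕ) = (V.filter (· < x)).card := by
      simp only [hσdef, Equiv.ofBijective_apply, hfdef, he0]
      rfl
    rw [this, hfilx, Finset.card_image_of_injective _ π.injective, hS1card]
    omega
  have hσ1 : (σ ⟨1, h1k⟩ : ℕ) + 1 = a + l := by
    have : (σ ⟨1, h1k⟩ : ℕ) = (V.filter (· < y)).card := by
      simp only [hσdef, Equiv.ofBijective_apply, hfdef, he1]
      rfl
    rw [this, hfily, Finset.card_image_of_injective _ π.injective,
      card_insert_of_notMem (by
        simp only [mem_union]
        rintro (h' | h') <;> exact hp0U (by simp [hUdef, h'])),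
      card_union_of_disjoint hd12, hS1card, hS2card]
    omega
  intro hav
  refine hav σ h0k h1k hσ0 hσ1 ⟨e, e.strictMono, ?_, ?_⟩
  · rintro j hj rfl
    rw [he0, he1]
  · intro s t
    simpa only [hσdef, Equiv.ofBijective_apply] using hford s t

lemma avoidsC_iff_not_containsC {a l k n : ℕ} (ha : 1 ≤ a) (hl : 1 ≤ l) (hak : a + l ≤ k)
    (π : Equiv.Perm (Fin n)) : AvoidsC a l k π ↔ ¬ ContainsC a l k π := by
  constructor
  · intro hav hc
    exact not_avoidsC_of_containsC ha hl hak hc hav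
  · intro hnc σ h0 h1 hs0 hs1 hocc
    exact hnc (containsC_of_isOcc hl σ h0 h1 hs0 hs1 hocc)

/-! ### Decomposition by the first letter -/

lemma succAbove_val {m : ℕ} (j : Fin (m + 1)) (v : Fin m) :
    ((j.succAbove v) : ℕ) = if (v : ℕ) < (j : ℕ) then (v : ℕ) else (v : ℕ) + 1 := by
  by_cases h : (v : ℕ) < (j : ℕ)
  · rw [if_pos h, Fin.succAbove_of_castSucc_lt _ _ (by
      rw [Fin.lt_iff_val_lt_val]; exact h)]
    rfl
  · rw [if_neg h, Fin.succAbove_of_le_castSucc _ _ (by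
      rw [Fin.le_iff_val_le_val]; simpa using Nat.le_of_not_lt h)]
    rfl

lemma sA_lt_sA {m : ℕ} (j : Fin (m + 1)) (v w : Fin m) :
    j.succAbove v < j.succAbove w ↔ v < w := Fin.succAbove_lt_succAbove_iff

lemma lt_sA {m : ℕ} (j : Fin (m + 1)) (v : Fin m) :
    j < j.succAbove v ↔ (j : ℕ) ≤ (v : ℕ) := by
  rw [Fin.lt_iff_val_lt_val, succAbove_val]
  split_ifs with h <;> omega

lemma sA_lt {m : ℕ} (j : Fin (m + 1)) (v : Fin m) :
    j.succAbove v < j ↔ (v : ℕ) < (j : ℕ) := by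
  rw [Fin.lt_iff_val_lt_val, succAbove_val]
  split_ifs with h <;> omega

def glue {m : ℕ} (j : Fin (m + 1)) (τ : Equiv.Perm (Fin m)) : Fin (m + 1) → Fin (m + 1) :=
  Fin.cases j (fun i => j.succAbove (τ i))

lemma glue_injective {m : ℕ} (j : Fin (m + 1)) (τ : Equiv.Perm (Fin m)) :
    Function.Injective (glue j τ) := by
  intro s t h
  induction s using Fin.cases with
  | zero =>
    induction t using Fin.cases with
    | zero => rfl
    | succ t =>
      simp only [glue, Fin.cases_zero, Fin.cases_succ] at h
      exact absurd h.symm (Fin.succAbove_ne j (τ t))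
  | succ s =>
    induction t using Fin.cases with
    | zero =>
      simp only [glue, Fin.cases_zero, Fin.cases_succ] at h
      exact absurd h (Fin.succAbove_ne j (τ s))
    | succ t =>
      simp only [glue, Fin.cases_succ] at h
      have := τ.injective (Fin.succAbove_right_injective h)
      rw [this]

noncomputable def Fperm {m : ℕ} (j : Fin (m + 1)) (τ : Equiv.Perm (Fin m)) :
    Equiv.Perm (Fin (m + 1)) :=
  Equiv.ofBijective (glue j τ) (Finite.injective_iff_bijective.mp (glue_injective j τ))

@[simp] lemma Fperm_zero {m : ℕ} (j : Fin (m + 1)) (τ : Equiv.Perm (Fin m)) :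
    Fperm j τ 0 = j := rfl

@[simp] lemma Fperm_succ {m : ℕ} (j : Fin (m + 1)) (τ : Equiv.Perm (Fin m)) (w : Fin m) :
    Fperm j τ w.succ = j.succAbove (τ w) := by
  simp [Fperm, glue, Equiv.ofBijective_apply]

lemma Fperm_bijective {m : ℕ} :
    Function.Bijective (fun p : Fin (m + 1) × Equiv.Perm (Fin m) => Fperm p.1 p.2) := by
  rw [Fintype.bijective_iff_injective_and_card]
  constructor
  · rintro ⟨j, τ⟩ ⟨j', τ'⟩ h
    simp only at h
    have h0 : j = j' := by
      have := congrArg (fun ρ : Equiv.Perm (Fin (m+1)) => ρ 0) h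
      simpa using this
    subst h0
    have hτ : τ = τ' := by
      apply Equiv.ext
      intro w
      have := congrArg (fun ρ : Equiv.Perm (Fin (m+1)) => ρ w.succ) h
      simp only [Fperm_succ] at this
      exact Fin.succAbove_right_injective this
    rw [hτ]
  · rw [Fintype.card_prod, Fintype.card_perm, Fintype.card_perm,
      Fintype.card_fin, Fintype.card_fin, Nat.factorial_succ]

/-- The "bad first two letters" condition, `J`, `v` are `0`-based values. -/
def BadP (a l k m J v : ℕ) : Prop :=
  a - 1 ≤ J ∧ J + (l - 1) ≤ v ∧ v + (k - (a + l)) + 1 ≤ m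

instance (a l k m J v : ℕ) : Decidable (BadP a l k m J v) := by
  unfold BadP; infer_instance

lemma card_succ_filter {m : ℕ} (c : ℕ) (P : Fin (m + 1) → Prop) [DecidablePred P] :
    ((univ : Finset (Fin (m + 1))).filter fun t : Fin (m+1) => c + 1 < (t : ℕ) ∧ P t).card
      = ((univ : Finset (Fin m)).filter fun w : Fin m => c < (w : ℕ) ∧ P w.succ).card := by
  have h : ((univ : Finset (Fin (m + 1))).filter fun t : Fin (m+1) => c + 1 < (t : ℕ) ∧ P t)
      = ((univ : Finset (Fin m)).filter fun w : Fin m => c < (w : ℕ) ∧ P w.succ).image Fin.succ := by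
    ext t
    simp only [mem_filter, mem_univ, true_and, Finset.mem_image]
    constructor
    · rintro ⟨hct, hPt⟩
      have ht0 : t ≠ 0 := by
        intro h'; rw [h'] at hct; simp at hct
      obtain ⟨w, rfl⟩ := Fin.exists_succ_eq.mpr ht0
      exact ⟨w, ⟨by simpa using hct, hPt⟩, rfl⟩
    · rintro ⟨w, ⟨hcw, hPw⟩, rfl⟩
      exact ⟨by simpa using hcw, hPw⟩
  rw [h, Finset.card_image_of_injective _ (Fin.succ_injective m)]

lemma filter_drop_zero {m : ℕ} (Q : Fin m → Prop) [DecidablePred Q]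
    (hQ0 : ∀ hm : 0 < m, ¬ Q ⟨0, hm⟩) :
    ((univ : Finset (Fin m)).filter fun w : Fin m => 0 < (w : ℕ) ∧ Q w)
      = (univ : Finset (Fin m)).filter Q := by
  ext w
  simp only [mem_filter, mem_univ, true_and]
  constructor
  · exact fun h => h.2
  · intro h
    refine ⟨?_, h⟩
    rcases Nat.eq_zero_or_pos (w : ℕ) with h0 | h0
    · exfalso
      have : w = ⟨0, w.pos⟩ := Fin.ext h0
      exact hQ0 w.pos (this ▸ h)
    · exact h0

lemma perm_filter_Ico_card {k : ℕ} (σ : Equiv.Perm (Fin k)) (c₁ c₂ : Fin k) :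
    ((univ : Finset (Fin k)).filter fun s => c₁ ≤ σ s ∧ σ s < c₂).card
      = (c₂ : ℕ) - (c₁ : ℕ) := by
  have h : ((univ : Finset (Fin k)).filter fun s => c₁ ≤ σ s ∧ σ s < c₂)
      = (Ico c₁ c₂).map σ.symm.toEmbedding := by
    ext s
    simp [Equiv.symm_apply_eq, eq_comm, and_comm]
  rw [h, Finset.card_map, Fin.card_Ico]

section FpermCards
variable {m : ℕ} (j : Fin (m + 1)) (τ : Equiv.Perm (Fin m))

lemma Fperm_at_zero : Fperm j τ ⟨0, Nat.succ_pos m⟩ = j := rfl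

lemma Fperm_at_succ (i' : ℕ) (hi' : i' < m) :
    Fperm j τ ⟨i' + 1, by omega⟩ = j.succAbove (τ ⟨i', hi'⟩) := by
  have h : (⟨i' + 1, by omega⟩ : Fin (m + 1)) = Fin.succ ⟨i', hi'⟩ := rfl
  rw [h, Fperm_succ]

lemma FpermA0 (hm : 0 < m) (hjv : (j : ℕ) ≤ (τ ⟨0, hm⟩ : ℕ)) :
    ((univ : Finset (Fin (m + 1))).filter
      fun t : Fin (m + 1) => 0 + 1 < (t : ℕ) ∧ Fperm j τ t < Fperm j τ ⟨0, Nat.succ_pos m⟩).card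
      = (j : ℕ) := by
  have hjm : (j : ℕ) < m := lt_of_le_of_lt hjv (τ ⟨0, hm⟩).isLt
  set jm : Fin m := ⟨(j : ℕ), hjm⟩ with hjmdef
  rw [card_succ_filter 0 (fun t => Fperm j τ t < Fperm j τ ⟨0, Nat.succ_pos m⟩)]
  rw [Finset.filter_congr (q := fun w : Fin m => 0 < (w : ℕ) ∧ τ w < jm)
    (fun w _ => by
      rw [Fperm_succ, Fperm_at_zero]
      constructor
      · rintro ⟨h1, h2⟩
        exact ⟨h1, by rw [Fin.lt_iff_val_lt_val]; exact (sA_lt j (τ w)).mp h2⟩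
      · rintro ⟨h1, h2⟩
        exact ⟨h1, (sA_lt j (τ w)).mpr (by rw [Fin.lt_iff_val_lt_val] at h2; exact h2)⟩)]
  rw [filter_drop_zero (fun w => τ w < jm) (fun hm' => by
    have : (⟨0, hm'⟩ : Fin m) = ⟨0, hm⟩ := rfl
    show ¬ τ ⟨0, hm'⟩ < jm
    rw [this, Fin.lt_iff_val_lt_val]
    show ¬ (τ ⟨0, hm⟩ : ℕ) < (j : ℕ)
    omega)]
  rw [perm_filter_lt_card τ jm]

lemma FpermB0 (hm : 0 < m) (hjv : (j : ℕ) ≤ (τ ⟨0, hm⟩ : ℕ)) :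
    ((univ : Finset (Fin (m + 1))).filter
      fun t : Fin (m + 1) => 0 + 1 < (t : ℕ) ∧ Fperm j τ ⟨0, Nat.succ_pos m⟩ < Fperm j τ t ∧
        Fperm j τ t < Fperm j τ ⟨0 + 1, by omega⟩).card
      = (τ ⟨0, hm⟩ : ℕ) - (j : ℕ) := by
  have hjm : (j : ℕ) < m := lt_of_le_of_lt hjv (τ ⟨0, hm⟩).isLt
  set jm : Fin m := ⟨(j : ℕ), hjm⟩ with hjmdef
  rw [card_succ_filter 0 (fun t => Fperm j τ ⟨0, Nat.succ_pos m⟩ < Fperm j τ t ∧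
        Fperm j τ t < Fperm j τ ⟨0 + 1, by omega⟩)]
  rw [Finset.filter_congr (q := fun w : Fin m => 0 < (w : ℕ) ∧ (jm ≤ τ w ∧ τ w < τ ⟨0, hm⟩))
    (fun w _ => by
      rw [Fperm_succ, Fperm_at_zero, Fperm_at_succ j τ 0 hm]
      constructor
      · rintro ⟨h1, h2, h3⟩
        refine ⟨h1, ?_, ?_⟩
        · rw [Fin.le_iff_val_le_val]; exact (lt_sA j (τ w)).mp h2
        · exact (sA_lt_sA j (τ w) (τ ⟨0, hm⟩)).mp h3
      · rintro ⟨h1, h2, h3⟩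
        refine ⟨h1, ?_, ?_⟩
        · exact (lt_sA j (τ w)).mpr (by rw [Fin.le_iff_val_le_val] at h2; exact h2)
        · exact (sA_lt_sA j (τ w) (τ ⟨0, hm⟩)).mpr h3)]
  rw [filter_drop_zero (fun w => jm ≤ τ w ∧ τ w < τ ⟨0, hm⟩) (fun hm' => by
    have : (⟨0, hm'⟩ : Fin m) = ⟨0, hm⟩ := rfl
    show ¬ (jm ≤ τ ⟨0, hm'⟩ ∧ τ ⟨0, hm'⟩ < τ ⟨0, hm⟩)
    rw [this]
    rintro ⟨-, h2⟩
    exact absurd h2 (lt_irrefl _))]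
  rw [perm_filter_Ico_card τ jm (τ ⟨0, hm⟩)]

lemma FpermC0 (hm : 0 < m) :
    ((univ : Finset (Fin (m + 1))).filter
      fun t : Fin (m + 1) => 0 + 1 < (t : ℕ) ∧ Fperm j τ ⟨0 + 1, by omega⟩ < Fperm j τ t).card
      = m - 1 - (τ ⟨0, hm⟩ : ℕ) := by
  rw [card_succ_filter 0 (fun t => Fperm j τ ⟨0 + 1, by omega⟩ < Fperm j τ t)]
  rw [Finset.filter_congr (q := fun w : Fin m => 0 < (w : ℕ) ∧ τ ⟨0, hm⟩ < τ w)
    (fun w _ => by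
      rw [Fperm_succ, Fperm_at_succ j τ 0 hm]
      exact and_congr_right fun _ => sA_lt_sA j (τ ⟨0, hm⟩) (τ w))]
  rw [filter_drop_zero (fun w => τ ⟨0, hm⟩ < τ w) (fun hm' => by
    have : (⟨0, hm'⟩ : Fin m) = ⟨0, hm⟩ := rfl
    show ¬ τ ⟨0, hm⟩ < τ ⟨0, hm'⟩
    rw [this]
    exact lt_irrefl _)]
  rw [perm_filter_gt_card τ (τ ⟨0, hm⟩)]

lemma FpermA1 (i' : ℕ) (hi' : i' + 1 < m) :
    ((univ : Finset (Fin (m + 1))).filter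
      fun t : Fin (m + 1) => i' + 1 + 1 < (t : ℕ) ∧ Fperm j τ t < Fperm j τ ⟨i' + 1, by omega⟩).card
      = ((univ : Finset (Fin m)).filter
      fun w : Fin m => i' + 1 < (w : ℕ) ∧ τ w < τ ⟨i', by omega⟩).card := by
  rw [card_succ_filter (i' + 1) (fun t => Fperm j τ t < Fperm j τ ⟨i' + 1, by omega⟩)]
  apply congrArg
  apply Finset.filter_congr
  intro w _
  rw [Fperm_succ, Fperm_at_succ j τ i' (by omega)]
  exact and_congr_right fun _ => sA_lt_sA j (τ w) (τ ⟨i', by omega⟩)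

lemma FpermB1 (i' : ℕ) (hi' : i' + 1 < m) :
    ((univ : Finset (Fin (m + 1))).filter
      fun t : Fin (m + 1) => i' + 1 + 1 < (t : ℕ) ∧ Fperm j τ ⟨i' + 1, by omega⟩ < Fperm j τ t ∧
        Fperm j τ t < Fperm j τ ⟨i' + 1 + 1, by omega⟩).card
      = ((univ : Finset (Fin m)).filter
      fun w : Fin m => i' + 1 < (w : ℕ) ∧ τ ⟨i', by omega⟩ < τ w ∧ τ w < τ ⟨i' + 1, hi'⟩).card := by
  rw [card_succ_filter (i' + 1) (fun t => Fperm j τ ⟨i' + 1, by omega⟩ < Fperm j τ t ∧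
        Fperm j τ t < Fperm j τ ⟨i' + 1 + 1, by omega⟩)]
  apply congrArg
  apply Finset.filter_congr
  intro w _
  rw [Fperm_succ, Fperm_at_succ j τ i' (by omega), Fperm_at_succ j τ (i' + 1) hi']
  exact and_congr_right fun _ => and_congr (sA_lt_sA j (τ ⟨i', by omega⟩) (τ w))
    (sA_lt_sA j (τ w) (τ ⟨i' + 1, hi'⟩))

lemma FpermC1 (i' : ℕ) (hi' : i' + 1 < m) :
    ((univ : Finset (Fin (m + 1))).filter
      fun t : Fin (m + 1) => i' + 1 + 1 < (t : ℕ) ∧ Fperm j τ ⟨i' + 1 + 1, by omega⟩ < Fperm j τ t).card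
      = ((univ : Finset (Fin m)).filter
      fun w : Fin m => i' + 1 < (w : ℕ) ∧ τ ⟨i' + 1, hi'⟩ < τ w).card := by
  rw [card_succ_filter (i' + 1) (fun t => Fperm j τ ⟨i' + 1 + 1, by omega⟩ < Fperm j τ t)]
  apply congrArg
  apply Finset.filter_congr
  intro w _
  rw [Fperm_succ, Fperm_at_succ j τ (i' + 1) hi']
  exact and_congr_right fun _ => sA_lt_sA j (τ ⟨i' + 1, hi'⟩) (τ w)

end FpermCards

lemma containsC_Fperm_iff {a l k m : ℕ} (hl : 1 ≤ l)
    (j : Fin (m + 1)) (τ : Equiv.Perm (Fin m)) :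
    ContainsC a l k (Fperm j τ) ↔
      ContainsC a l k τ ∨ ∃ hm : 0 < m, BadP a l k m (j : ℕ) ((τ ⟨0, hm⟩ : ℕ)) := by
  constructor
  · rintro ⟨i, hi, hasc, hA, hB, hC⟩
    rcases Nat.eq_zero_or_pos i with rfl | hpos
    · right
      have hm : 0 < m := by omega
      refine ⟨hm, ?_⟩
      have hjv : (j : ℕ) ≤ (τ ⟨0, hm⟩ : ℕ) := by
        rw [Fperm_at_zero j τ,
          Fperm_at_succ j τ 0 hm] at hasc
        exact (lt_sA j _).mp hasc
      rw [FpermA0 j τ hm hjv] at hA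
      rw [FpermB0 j τ hm hjv] at hB
      rw [FpermC0 j τ hm] at hC
      have := (τ ⟨0, hm⟩).isLt
      exact ⟨by omega, by omega, by omega⟩
    · left
      obtain ⟨i', rfl⟩ : ∃ i', i = i' + 1 := ⟨i - 1, by omega⟩
      have hi' : i' + 1 < m := by omega
      refine ⟨i', hi', ?_, ?_, ?_, ?_⟩
      · rw [Fperm_at_succ j τ i' (by omega), Fperm_at_succ j τ (i' + 1) hi'] at hasc
        exact (sA_lt_sA j _ _).mp hasc
      · rw [FpermA1 j τ i' hi'] at hA; exact hA
      · rw [FpermB1 j τ i' hi'] at hB; exact hB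
      · rw [FpermC1 j τ i' hi'] at hC; exact hC
  · rintro (⟨i', hi', hasc, hA, hB, hC⟩ | ⟨hm, hbad⟩)
    · refine ⟨i' + 1, by omega, ?_, ?_, ?_, ?_⟩
      · rw [Fperm_at_succ j τ i' (by omega), Fperm_at_succ j τ (i' + 1) hi']
        exact (sA_lt_sA j _ _).mpr hasc
      · rw [FpermA1 j τ i' hi']; exact hA
      · rw [FpermB1 j τ i' hi']; exact hB
      · rw [FpermC1 j τ i' hi']; exact hC
    · obtain ⟨hj, hlv, hvk⟩ := hbad
      have hjv : (j : ℕ) ≤ (τ ⟨0, hm⟩ : ℕ) := by omega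
      refine ⟨0, by omega, ?_, ?_, ?_, ?_⟩
      · rw [Fperm_at_zero j τ, Fperm_at_succ j τ 0 hm]
        exact (lt_sA j _).mpr hjv
      · rw [FpermA0 j τ hm hjv]; omega
      · rw [FpermB0 j τ hm hjv]; omega
      · rw [FpermC0 j τ hm]; omega

/-! ### Counting -/

noncomputable def NCc (a l k n : ℕ) : ℕ :=
  Nat.card {π : Equiv.Perm (Fin n) // ¬ ContainsC a l k π}

noncomputable def NDc (a l k n j : ℕ) : ℕ :=
  Nat.card {π : Equiv.Perm (Fin n) //
    ¬ ContainsC a l k π ∧ ∃ h : 0 < n, (π ⟨0, h⟩ : ℕ) = j}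

lemma nat_card_sigma {β : Type} [Fintype β] (γ : β → Type) [∀ b, Finite (γ b)] :
    Nat.card ((b : β) × γ b) = ∑ b : β, Nat.card (γ b) := by
  classical
  letI : ∀ b, Fintype (γ b) := fun b => Fintype.ofFinite _
  simp only [Nat.card_eq_fintype_card]
  exact Fintype.card_sigma

lemma card_fiber_sum {α β : Type} [Fintype α] [Fintype β] [DecidableEq β]
    (P : α → Prop) (f : α → β) :
    Nat.card {x : α // P x} = ∑ b : β, Nat.card {x : α // P x ∧ f x = b} := by
  classical
  have E : {x : α // P x} ≃ (b : β) × {x : α // P x ∧ f x = b} :=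
    (Equiv.sigmaFiberEquiv (fun y : {x : α // P x} => f y.1)).symm.trans
      (Equiv.sigmaCongrRight
        (fun b => Equiv.subtypeSubtypeEquivSubtypeInter P (fun x => f x = b)))
  rw [Nat.card_congr E, nat_card_sigma]

lemma NCc_eq_sum (a l k m : ℕ) :
    NCc a l k (m + 1) = ∑ v : Fin (m + 1), NDc a l k (m + 1) (v : ℕ) := by
  classical
  rw [NCc, card_fiber_sum (fun π : Equiv.Perm (Fin (m + 1)) => ¬ ContainsC a l k π)
    (fun π => π ⟨0, Nat.succ_pos m⟩)]
  apply Finset.sum_congr rfl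
  intro b _
  rw [NDc]
  apply Nat.card_congr
  apply Equiv.subtypeEquivRight
  intro π
  constructor
  · rintro ⟨h1, h2⟩
    exact ⟨h1, Nat.succ_pos m, by rw [h2]⟩
  · rintro ⟨h1, h0, h2⟩
    exact ⟨h1, Fin.ext h2⟩

lemma containsC_of_le_one {a l k n : ℕ} (hn : n ≤ 1) (π : Equiv.Perm (Fin n)) :
    ¬ ContainsC a l k π := by
  rintro ⟨i, hi, -⟩
  omega

lemma NDc_one (a a' l k j : ℕ) : NDc a l k 1 j = NDc a' l k 1 j := by
  rw [NDc, NDc]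
  apply Nat.card_congr
  apply Equiv.subtypeEquivRight
  intro π
  constructor <;> rintro ⟨-, h⟩ <;> exact ⟨containsC_of_le_one le_rfl π, h⟩

lemma NCc_zero (a a' l k : ℕ) : NCc a l k 0 = NCc a' l k 0 := by
  rw [NCc, NCc]
  apply Nat.card_congr
  apply Equiv.subtypeEquivRight
  intro π
  constructor <;> intro <;> exact containsC_of_le_one (by omega) π

lemma NDc_succ {a l k m : ℕ} (hl : 1 ≤ l) (hm : 0 < m) (J : ℕ) (hJ : J < m + 1) :
    NDc a l k (m + 1) J
      = ∑ v : Fin m, if BadP a l k m J (v : ℕ) then 0 else NDc a l k m (v : ℕ) := by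
  classical
  set FE : (Fin (m + 1) × Equiv.Perm (Fin m)) ≃ Equiv.Perm (Fin (m + 1)) :=
    Equiv.ofBijective _ Fperm_bijective with hFE
  have h1 : NDc a l k (m + 1) J = Nat.card {p : Fin (m + 1) × Equiv.Perm (Fin m) //
      (p.1 : ℕ) = J ∧ ¬ ContainsC a l k p.2 ∧
        ¬ BadP a l k m J ((p.2 ⟨0, hm⟩ : ℕ))} := by
    rw [NDc]
    apply Nat.card_congr
    refine (Equiv.subtypeEquiv FE ?_).symm
    rintro ⟨j, τ⟩
    show ((j : ℕ) = J ∧ ¬ ContainsC a l k τ ∧ ¬ BadP a l k m J ((τ ⟨0, hm⟩ : ℕ)))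
      ↔ (¬ ContainsC a l k (Fperm j τ) ∧
          ∃ h : 0 < m + 1, ((Fperm j τ) ⟨0, h⟩ : ℕ) = J)
    constructor
    · rintro ⟨hjJ, hCτ, hB⟩
      refine ⟨?_, Nat.succ_pos m, by rw [Fperm_at_zero j τ, hjJ]⟩
      rw [containsC_Fperm_iff hl]
      rintro (h | ⟨hm', hb⟩)
      · exact hCτ h
      · rw [show (⟨0, hm'⟩ : Fin m) = ⟨0, hm⟩ from rfl] at hb
        rw [hjJ] at hb
        exact hB hb
    · rintro ⟨hnC, h0, hval⟩
      rw [Fperm_at_zero j τ] at hval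
      rw [containsC_Fperm_iff hl] at hnC
      push_neg at hnC
      refine ⟨hval, hnC.1, ?_⟩
      intro hb
      exact hnC.2 hm (by rw [hval]; exact hb)
  rw [h1]
  have h2 : Nat.card {p : Fin (m + 1) × Equiv.Perm (Fin m) //
      (p.1 : ℕ) = J ∧ ¬ ContainsC a l k p.2 ∧
        ¬ BadP a l k m J ((p.2 ⟨0, hm⟩ : ℕ))}
      = Nat.card {τ : Equiv.Perm (Fin m) //
      ¬ ContainsC a l k τ ∧ ¬ BadP a l k m J ((τ ⟨0, hm⟩ : ℕ))} := by
    apply Nat.card_congr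
    refine ⟨fun p => ⟨p.1.2, p.2.2⟩, fun τ => ⟨(⟨J, hJ⟩, τ.1), rfl, τ.2⟩, ?_, ?_⟩
    · rintro ⟨⟨j, τ⟩, hjJ, hrest⟩
      apply Subtype.ext
      show ((⟨J, hJ⟩ : Fin (m + 1)), τ) = (j, τ)
      have : j = ⟨J, hJ⟩ := Fin.ext hjJ
      rw [this]
    · rintro ⟨τ, hτ⟩
      rfl
  rw [h2]
  rw [card_fiber_sum (fun τ : Equiv.Perm (Fin m) =>
    ¬ ContainsC a l k τ ∧ ¬ BadP a l k m J ((τ ⟨0, hm⟩ : ℕ)))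
    (fun τ => τ ⟨0, hm⟩)]
  apply Finset.sum_congr rfl
  intro v _
  by_cases hb : BadP a l k m J (v : ℕ)
  · rw [if_pos hb]
    have : IsEmpty {τ : Equiv.Perm (Fin m) //
        (¬ ContainsC a l k τ ∧ ¬ BadP a l k m J ((τ ⟨0, hm⟩ : ℕ))) ∧ τ ⟨0, hm⟩ = v} := by
      constructor
      rintro ⟨τ, ⟨-, hB⟩, h0⟩
      rw [h0] at hB
      exact hB hb
    exact Nat.card_of_isEmpty
  · rw [if_neg hb, NDc]
    apply Nat.card_congr
    apply Equiv.subtypeEquivRight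
    intro τ
    constructor
    · rintro ⟨⟨hC, -⟩, h0⟩
      exact ⟨hC, hm, by rw [h0]⟩
    · rintro ⟨hC, h0, hval⟩
      have hev : τ ⟨0, hm⟩ = v := Fin.ext hval
      exact ⟨⟨hC, by rw [hev]; exact hb⟩, hev⟩

/-! ### The rotation bijection on first letters -/

def rot (a n J : ℕ) : ℕ := (J + (n - (a - 1) % n)) % n

lemma rot_lt {n : ℕ} (a : ℕ) (hn : 0 < n) (J : ℕ) : rot a n J < n :=
  Nat.mod_lt _ hn

def rotEquiv (a : ℕ) {n : ℕ} (hn : 0 < n) : Fin n ≃ Fin n where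
  toFun v := ⟨rot a n (v : ℕ), rot_lt a hn _⟩
  invFun v := ⟨((v : ℕ) + (a - 1) % n) % n, Nat.mod_lt _ hn⟩
  left_inv v := by
    apply Fin.ext
    show (rot a n (v : ℕ) + (a - 1) % n) % n = (v : ℕ)
    rw [rot, Nat.mod_add_mod]
    have hr : (a - 1) % n ≤ n := le_of_lt (Nat.mod_lt _ hn)
    have h : (v : ℕ) + (n - (a - 1) % n) + (a - 1) % n = (v : ℕ) + n := by omega
    rw [h, Nat.add_mod_right, Nat.mod_eq_of_lt v.isLt]
  right_inv v := by
    apply Fin.ext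
    show rot a n (((v : ℕ) + (a - 1) % n) % n) = (v : ℕ)
    rw [rot, Nat.mod_add_mod]
    have hr : (a - 1) % n ≤ n := le_of_lt (Nat.mod_lt _ hn)
    have h : (v : ℕ) + (a - 1) % n + (n - (a - 1) % n) = (v : ℕ) + n := by omega
    rw [h, Nat.add_mod_right, Nat.mod_eq_of_lt v.isLt]

lemma rot_closed {a n : ℕ} (ha1 : a - 1 < n) (J : ℕ) (hJ : J < n) :
    rot a n J = if a - 1 ≤ J then J - (a - 1) else J + n - (a - 1) := by
  rw [rot, Nat.mod_eq_of_lt ha1]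
  split_ifs with h
  · have h2 : J + (n - (a - 1)) = (J - (a - 1)) + n := by omega
    rw [h2, Nat.add_mod_right, Nat.mod_eq_of_lt (by omega)]
  · have h2 : J + (n - (a - 1)) < n := by omega
    rw [Nat.mod_eq_of_lt h2]
    omega

lemma badP_rot {a l k m : ℕ} (ha : 1 ≤ a) (hl : 1 ≤ l) (hak : a + l ≤ k)
    (J v : ℕ) (hJ : J < m + 1) (hv : v < m) :
    BadP a l k m J v ↔ BadP 1 l k m (rot a (m + 1) J) (rot a m v) := by
  rcases le_or_gt k (m + 1) with hkm | hkm
  · have h1 : a - 1 < m := by omega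
    have h2 : a - 1 < m + 1 := by omega
    rw [rot_closed h2 J hJ, rot_closed h1 v hv]
    unfold BadP
    split_ifs <;> omega
  · constructor
    · rintro ⟨h1, h2, h3⟩
      exact absurd rfl (by omega : ¬ (0 : ℕ) = 0)
    · rintro ⟨h1, h2, h3⟩
      exact absurd rfl (by omega : ¬ (0 : ℕ) = 0)

lemma main_claim (a l k : ℕ) (ha : 1 ≤ a) (hl : 1 ≤ l) (hak : a + l ≤ k) :
    ∀ n : ℕ, (∀ J, J < n → NDc a l k n J = NDc 1 l k n (rot a n J)) ∧
      NCc a l k n = NCc 1 l k n := by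
  intro n
  induction n with
  | zero => exact ⟨fun J hJ => absurd hJ (Nat.not_lt_zero J), NCc_zero a 1 l k⟩
  | succ m ih =>
    have hD : ∀ J, J < m + 1 → NDc a l k (m + 1) J = NDc 1 l k (m + 1) (rot a (m + 1) J) := by
      intro J hJ
      rcases Nat.eq_zero_or_pos m with rfl | hm
      · have hJ0 : J = 0 := by omega
        have hrot : rot a 1 J = J := by
          rw [hJ0, rot, Nat.mod_one]
        rw [hrot]
        exact NDc_one a 1 l k J
      · rw [NDc_succ hl hm J hJ,
          NDc_succ (a := 1) hl hm (rot a (m + 1) J) (rot_lt a (by omega) _)]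
        have step1 : ∀ v : Fin m,
            (if BadP a l k m J (v : ℕ) then 0 else NDc a l k m (v : ℕ))
            = (if BadP 1 l k m (rot a (m + 1) J) (rot a m (v : ℕ)) then 0
               else NDc 1 l k m (rot a m (v : ℕ))) := by
          intro v
          by_cases hb : BadP a l k m J (v : ℕ)
          · rw [if_pos hb, if_pos ((badP_rot ha hl hak J (v : ℕ) hJ v.isLt).mp hb)]
          · rw [if_neg hb, if_neg (fun h =>
              hb ((badP_rot ha hl hak J (v : ℕ) hJ v.isLt).mpr h))]
            exact (ih.1 (v : ℕ) v.isLt)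
        rw [Finset.sum_congr rfl (fun v _ => step1 v)]
        exact Equiv.sum_comp (rotEquiv a hm)
          (fun w : Fin m => if BadP 1 l k m (rot a (m + 1) J) (w : ℕ) then 0
            else NDc 1 l k m (w : ℕ))
    refine ⟨hD, ?_⟩
    rw [NCc_eq_sum a l k m, NCc_eq_sum 1 l k m]
    rw [Finset.sum_congr rfl (fun (v : Fin (m + 1)) _ => hD (v : ℕ) v.isLt)]
    exact Equiv.sum_comp (rotEquiv a (Nat.succ_pos m))
      (fun w : Fin (m + 1) => NDc 1 l k (m + 1) (w : ℕ))

/-- For all `1 ≤ a ≤ k - l` and all `n ≥ 0`, the number of `C_{a,l}^k`-avoiding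
permutations in `S_n` equals the number of `C_{1,l}^k`-avoiding permutations in `S_n`. -/
theorem cC_indep_of_a (a l k n : ℕ) (hl : 1 ≤ l) (ha : 1 ≤ a) (hak : a ≤ k - l) :
    cC a l k n = cC 1 l k n := by
  have hak' : a + l ≤ k := by omega
  have h1 : cC a l k n = NCc a l k n := by
    rw [cC, NCc]
    exact Nat.card_congr (Equiv.subtypeEquivRight
      (fun π => avoidsC_iff_not_containsC ha hl hak' π))
  have h2 : cC 1 l k n = NCc 1 l k n := by
    rw [cC, NCc]
    exact Nat.card_congr (Equiv.subtypeEquivRight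
      (fun π => avoidsC_iff_not_containsC le_rfl hl (by omega) π))
  rw [h1, h2]
  exact (main_claim a l k ha hl hak' n).2
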